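/- For every θ > 0 and every ε ∈ (0,1), the derivative of the regularized potential satisfies |F_ε'(s)| ≤ |F'(s)| for every s ∈ (−1,1), where F'(s) = (θ/2)·log((1+s)/(1−s)). -/

import Mathlib

open Real Set Filter MeasureTheory Topology

/-- The Flory–Huggins potential. -/
noncomputable def FH (θ s : ℝ) : ℝ :=
  (θ / 2) * ((1 + s) * Real.log (1 + s) + (1 - s) * Real.log (1 - s))

/-- Its first derivative on `(-1,1)`. -/
noncomputable def FH' (θ s : ℝ) : ℝ :=
  (θ / 2) * Real.log ((1 + s) / (1 - s))

/-- The regularized (quadratic extension) Flory–Huggins potential `F_ε`.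
Note that `F''(±(1-ε)) = θ/(ε(2-ε))`. -/
noncomputable def FHreg (θ ε s : ℝ) : ℝ :=
  if 1 - ε < s then
    FH θ (1 - ε) + FH' θ (1 - ε) * (s - (1 - ε))
      + (1 / 2) * (θ / (ε * (2 - ε))) * (s - (1 - ε)) ^ 2
  else if s < -1 + ε then
    FH θ (-1 + ε) + FH' θ (-1 + ε) * (s - (-1 + ε))
      + (1 / 2) * (θ / (ε * (2 - ε))) * (s - (-1 + ε)) ^ 2
  else FH θ s

/-- The derivative of the regularized potential. -/
noncomputable def FHreg' (θ ε s : ℝ) : ℝ :=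
  if 1 - ε < s then FH' θ (1 - ε) + (θ / (ε * (2 - ε))) * (s - (1 - ε))
  else if s < -1 + ε then FH' θ (-1 + ε) + (θ / (ε * (2 - ε))) * (s - (-1 + ε))
  else FH' θ s

lemma FH'_neg (θ x : ℝ) : FH' θ (-x) = - FH' θ x := by
  have h : (1 + -x) / (1 - -x) = ((1 + x) / (1 - x))⁻¹ := by
    rw [inv_div]; ring_nf
  rw [FH', FH', h, Real.log_inv]; ring

lemma FH_hasDerivAt (θ : ℝ) {s : ℝ} (h1 : -1 < s) (h2 : s < 1) :
    HasDerivAt (FH θ) (FH' θ s) s := by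
  have hp : (0:ℝ) < 1 + s := by linarith
  have hm : (0:ℝ) < 1 - s := by linarith
  have d1 : HasDerivAt (fun x : ℝ => 1 + x) 1 s := by
    simpa using (hasDerivAt_id s).const_add 1
  have d2 : HasDerivAt (fun x : ℝ => 1 - x) (-1) s := by
    simpa using (hasDerivAt_id s).const_sub 1
  have l1 : HasDerivAt (fun x : ℝ => Real.log (1 + x)) ((1 + s)⁻¹ * 1) s :=
    (Real.hasDerivAt_log hp.ne').comp s d1
  have l2 : HasDerivAt (fun x : ℝ => Real.log (1 - x)) ((1 - s)⁻¹ * (-1)) s :=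
    (Real.hasDerivAt_log hm.ne').comp s d2
  have key : HasDerivAt (FH θ)
      ((θ / 2) * ((1 * Real.log (1 + s) + (1 + s) * ((1 + s)⁻¹ * 1))
        + ((-1) * Real.log (1 - s) + (1 - s) * ((1 - s)⁻¹ * (-1))))) s :=
    ((d1.mul l1).add (d2.mul l2)).const_mul (θ / 2)
  convert key using 1
  rw [FH', Real.log_div hp.ne' hm.ne']
  field_simp
  ring

lemma FH'_hasDerivAt (θ : ℝ) {s : ℝ} (h1 : -1 < s) (h2 : s < 1) :
    HasDerivAt (FH' θ) (θ / (1 - s ^ 2)) s := by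
  have hp : (0:ℝ) < 1 + s := by linarith
  have hm : (0:ℝ) < 1 - s := by linarith
  have d1 : HasDerivAt (fun x : ℝ => 1 + x) 1 s := by
    simpa using (hasDerivAt_id s).const_add 1
  have d2 : HasDerivAt (fun x : ℝ => 1 - x) (-1) s := by
    simpa using (hasDerivAt_id s).const_sub 1
  have l1 : HasDerivAt (fun x : ℝ => Real.log (1 + x)) ((1 + s)⁻¹ * 1) s :=
    (Real.hasDerivAt_log hp.ne').comp s d1
  have l2 : HasDerivAt (fun x : ℝ => Real.log (1 - x)) ((1 - s)⁻¹ * (-1)) s :=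
    (Real.hasDerivAt_log hm.ne').comp s d2
  have key : HasDerivAt (fun x => (θ / 2) * (Real.log (1 + x) - Real.log (1 - x)))
      ((θ / 2) * ((1 + s)⁻¹ * 1 - (1 - s)⁻¹ * (-1))) s := (l1.sub l2).const_mul (θ / 2)
  have ev : FH' θ =ᶠ[𝓝 s] fun x => (θ / 2) * (Real.log (1 + x) - Real.log (1 - x)) := by
    filter_upwards [Ioo_mem_nhds h1 h2] with y hy
    have hy1 : (0:ℝ) < 1 + y := by linarith [hy.1]
    have hy2 : (0:ℝ) < 1 - y := by linarith [hy.2]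
    rw [FH', Real.log_div hy1.ne' hy2.ne']
  have hms : (1 - s ^ 2) ≠ 0 := by nlinarith
  have := key.congr_of_eventuallyEq ev
  refine this.congr_deriv ?_
  field_simp
  ring

lemma quad_hasDerivAt (p q r t x : ℝ) :
    HasDerivAt (fun s : ℝ => p + q * (s - t) + (1 / 2) * r * (s - t) ^ 2)
      (q + r * (x - t)) x := by
  have h : HasDerivAt (fun s : ℝ => s - t) 1 x := (hasDerivAt_id x).sub_const t
  have h2 : HasDerivAt (fun s : ℝ => (s - t) ^ 2) ((2:ℕ) * (x - t) ^ 1 * 1) x := h.pow 2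
  have key := (((h.const_mul q).const_add p).add (h2.const_mul ((1:ℝ) / 2 * r)))
  refine key.congr_deriv ?_
  push_cast
  ring

/-- Tangent line inequality on the right transition region. -/
lemma key_ineq (θ ε : ℝ) (hθ : 0 < θ) (hε0 : 0 < ε) (hε1 : ε < 1) {s : ℝ}
    (hs : 1 - ε < s) (hs1 : s < 1) :
    0 ≤ FH' θ (1 - ε) + (θ / (ε * (2 - ε))) * (s - (1 - ε)) ∧
      FH' θ (1 - ε) + (θ / (ε * (2 - ε))) * (s - (1 - ε)) ≤ FH' θ s := by
  have ha0 : (0:ℝ) < 1 - ε := by linarith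
  have hFH'a : 0 ≤ FH' θ (1 - ε) := by
    rw [FH']
    have h1 : (1:ℝ) ≤ (1 + (1 - ε)) / (1 - (1 - ε)) := by
      rw [le_div_iff₀ (by linarith : (0:ℝ) < 1 - (1 - ε))]; linarith
    exact mul_nonneg (by positivity) (Real.log_nonneg h1)
  have hc : 0 < θ / (ε * (2 - ε)) := by
    apply div_pos hθ; nlinarith
  constructor
  · have : 0 ≤ (θ / (ε * (2 - ε))) * (s - (1 - ε)) := mul_nonneg hc.le (by linarith)
    linarith
  · -- MVT on [1-ε, s]
    have hcont : ContinuousOn (FH' θ) (Icc (1 - ε) s) := by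
      intro x hx
      exact (FH'_hasDerivAt θ (by linarith [hx.1] : -1 < x)
        (by linarith [hx.2] : x < 1)).continuousAt.continuousWithinAt
    obtain ⟨ξ, hξ, hEq⟩ := exists_hasDerivAt_eq_slope (FH' θ) (fun x => θ / (1 - x ^ 2)) hs
      hcont (fun x hx => FH'_hasDerivAt θ (by linarith [hx.1] : -1 < x)
        (by linarith [hx.2] : x < 1))
    have hξa : 1 - ε < ξ := hξ.1
    have hξs : ξ < s := hξ.2
    have hξ1 : 0 < 1 - ξ ^ 2 := by nlinarith
    have hξ2 : 1 - ξ ^ 2 ≤ ε * (2 - ε) := by nlinarith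
    rw [eq_div_iff (by linarith : s - (1 - ε) ≠ 0)] at hEq
    have hmono : (θ / (ε * (2 - ε))) * (s - (1 - ε)) ≤ (θ / (1 - ξ ^ 2)) * (s - (1 - ε)) := by
      gcongr
    linarith

lemma FHreg_hasDerivAt (θ ε : ℝ) (hε0 : 0 < ε) (hε1 : ε < 1) (s : ℝ) :
    HasDerivAt (FHreg θ ε) (FHreg' θ ε s) s := by
  have hba : -1 + ε < 1 - ε := by linarith
  by_cases hA : 1 - ε < s
  · have hq := quad_hasDerivAt (FH θ (1 - ε)) (FH' θ (1 - ε)) (θ / (ε * (2 - ε))) (1 - ε) s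
    have key : HasDerivAt (FHreg θ ε)
        (FH' θ (1 - ε) + (θ / (ε * (2 - ε))) * (s - (1 - ε))) s := by
      refine hq.congr_of_eventuallyEq ?_
      filter_upwards [Ioi_mem_nhds hA] with y (hy : 1 - ε < y)
      rw [FHreg, if_pos hy]
    rw [FHreg', if_pos hA]
    exact key
  by_cases hB : s < -1 + ε
  · have hq := quad_hasDerivAt (FH θ (-1 + ε)) (FH' θ (-1 + ε)) (θ / (ε * (2 - ε))) (-1 + ε) s
    have key : HasDerivAt (FHreg θ ε)
        (FH' θ (-1 + ε) + (θ / (ε * (2 - ε))) * (s - (-1 + ε))) s := by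
      refine hq.congr_of_eventuallyEq ?_
      filter_upwards [Iio_mem_nhds hB] with y (hy : y < -1 + ε)
      rw [FHreg, if_neg (not_lt.mpr (by linarith : y ≤ 1 - ε)), if_pos hy]
    rw [FHreg', if_neg hA, if_pos hB]
    exact key
  push_neg at hA hB
  rw [FHreg', if_neg (not_lt.mpr hA), if_neg (not_lt.mpr hB)]
  rcases hA.lt_or_eq with hlt | heq
  · rcases hB.lt_or_eq with heq2 | hlt2
    · -- strict middle
      have h := FH_hasDerivAt θ (by linarith : -1 < s) (by linarith : s < 1)
      refine h.congr_of_eventuallyEq ?_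
      filter_upwards [Ioo_mem_nhds heq2 hlt] with y hy
      rw [FHreg, if_neg (not_lt.mpr hy.2.le), if_neg (not_lt.mpr hy.1.le)]
    · -- s = -1 + ε : glue at the left junction
      subst hlt2
      have hq := quad_hasDerivAt (FH θ (-1 + ε)) (FH' θ (-1 + ε)) (θ / (ε * (2 - ε)))
        (-1 + ε) (-1 + ε)
      have hL : HasDerivWithinAt (FHreg θ ε)
          (FH' θ (-1 + ε) + (θ / (ε * (2 - ε))) * ((-1 + ε) - (-1 + ε)))
          (Iic (-1 + ε)) (-1 + ε) := by
        refine (hq.hasDerivWithinAt).congr ?_ ?_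
        · intro y hy
          rcases lt_or_eq_of_le (mem_Iic.mp hy) with h | h
          · rw [FHreg, if_neg (not_lt.mpr (by linarith : y ≤ 1 - ε)), if_pos h]
          · rw [h, FHreg, if_neg (not_lt.mpr hba.le), if_neg (lt_irrefl _)]
            ring
        · rw [FHreg, if_neg (not_lt.mpr (by linarith : (-1 + ε : ℝ) ≤ 1 - ε)),
            if_neg (lt_irrefl _)]
          ring
      have hL' : HasDerivWithinAt (FHreg θ ε) (FH' θ (-1 + ε)) (Iic (-1 + ε)) (-1 + ε) := by
        simpa using hL
      have hR : HasDerivWithinAt (FHreg θ ε) (FH' θ (-1 + ε))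
          (Ico (-1 + ε) (1 - ε)) (-1 + ε) := by
        refine ((FH_hasDerivAt θ (by linarith : (-1:ℝ) < -1 + ε)
          (by linarith : -1 + ε < 1)).hasDerivWithinAt).congr ?_ ?_
        · intro y hy
          rw [FHreg, if_neg (not_lt.mpr hy.2.le), if_neg (not_lt.mpr hy.1)]
        · rw [FHreg, if_neg (not_lt.mpr (by linarith : (-1 + ε : ℝ) ≤ 1 - ε)),
            if_neg (lt_irrefl _)]
      have hU := hL'.union hR
      rw [Iic_union_Ico_eq_Iio hba] at hU
      exact hU.hasDerivAt (Iio_mem_nhds hba)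
  · -- s = 1 - ε : glue at the right junction
    subst heq
    have hq := quad_hasDerivAt (FH θ (1 - ε)) (FH' θ (1 - ε)) (θ / (ε * (2 - ε)))
      (1 - ε) (1 - ε)
    have hR : HasDerivWithinAt (FHreg θ ε)
        (FH' θ (1 - ε) + (θ / (ε * (2 - ε))) * ((1 - ε) - (1 - ε)))
        (Ici (1 - ε)) (1 - ε) := by
      refine (hq.hasDerivWithinAt).congr ?_ ?_
      · intro y hy
        rcases lt_or_eq_of_le (mem_Ici.mp hy) with h | h
        · rw [FHreg, if_pos h]
        · rw [← h, FHreg, if_neg (lt_irrefl _),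
            if_neg (not_lt.mpr (by linarith : (-1 + ε : ℝ) ≤ 1 - ε))]
          ring
      · rw [FHreg, if_neg (lt_irrefl _),
          if_neg (not_lt.mpr (by linarith : (-1 + ε : ℝ) ≤ 1 - ε))]
        ring
    have hR' : HasDerivWithinAt (FHreg θ ε) (FH' θ (1 - ε)) (Ici (1 - ε)) (1 - ε) := by
      simpa using hR
    have hL : HasDerivWithinAt (FHreg θ ε) (FH' θ (1 - ε))
        (Ioc (-1 + ε) (1 - ε)) (1 - ε) := by
      refine ((FH_hasDerivAt θ (by linarith : (-1:ℝ) < 1 - ε)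
        (by linarith : 1 - ε < 1)).hasDerivWithinAt).congr ?_ ?_
      · intro y hy
        rw [FHreg, if_neg (not_lt.mpr hy.2), if_neg (not_lt.mpr hy.1.le)]
      · rw [FHreg, if_neg (lt_irrefl _),
          if_neg (not_lt.mpr (by linarith : (-1 + ε : ℝ) ≤ 1 - ε))]
    have hU := hL.union hR'
    rw [Ioc_union_Ici_eq_Ioi hba] at hU
    exact hU.hasDerivAt (Ioi_mem_nhds hba)

theorem FHreg_deriv_abs_le (θ ε : ℝ) (hθ : 0 < θ) (hε : ε ∈ Set.Ioo (0 : ℝ) 1) :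
    ∀ s ∈ Set.Ioo (-1 : ℝ) 1, |deriv (FHreg θ ε) s| ≤ |FH' θ s| := by
  intro s hs
  rw [(FHreg_hasDerivAt θ ε hε.1 hε.2 s).deriv]
  by_cases hA : 1 - ε < s
  · have h := key_ineq θ ε hθ hε.1 hε.2 hA hs.2
    rw [FHreg', if_pos hA, abs_of_nonneg h.1]
    exact h.2.trans (le_abs_self _)
  by_cases hB : s < -1 + ε
  · have hms : 1 - ε < -s := by linarith
    have hms1 : -s < 1 := by linarith [hs.1]
    have h := key_ineq θ ε hθ hε.1 hε.2 hms hms1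
    rw [FHreg', if_neg hA, if_pos hB]
    have hrw : FH' θ (-1 + ε) + θ / (ε * (2 - ε)) * (s - (-1 + ε))
        = -(FH' θ (1 - ε) + θ / (ε * (2 - ε)) * (-s - (1 - ε))) := by
      have h1 : (-1 + ε : ℝ) = -(1 - ε) := by ring
      rw [h1, FH'_neg]; ring
    calc |FH' θ (-1 + ε) + θ / (ε * (2 - ε)) * (s - (-1 + ε))|
        = FH' θ (1 - ε) + θ / (ε * (2 - ε)) * (-s - (1 - ε)) := by
          rw [hrw, abs_neg, abs_of_nonneg h.1]
      _ ≤ FH' θ (-s) := h.2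
      _ ≤ |FH' θ (-s)| := le_abs_self _
      _ = |FH' θ s| := by rw [FH'_neg, abs_neg]
  · rw [FHreg', if_neg hA, if_neg hB]
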